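/- Let $h:\mathbb{R}^{m\times n}\to\mathbb{R}$ (with $m\le n$) be $\mu$-strongly convex with $L$-Lipschitz gradient, $L\ge\mu>0$, $\lambda>0$. Let $X_1,X_2\in\mathbb{R}^{m\times n}$ be pseudo-stationary points of $f(X)=h(X)+\lambda\|X\|_*$, with simultaneous decompositions $X_i = R_i[\Sigma_i\;0]P_i^\top$ and $-\nabla h(X_i) = R_i[D_i\;0]P_i^\top$ where $\Sigma_i = \mathrm{Diag}(\sigma(X_i))$ and $D_i = \mathrm{Diag}(d^i)$ with $d^i\ge 0$ and $d^i_1=\cdots=d^i_{\mathrm{rank}(X_i)}=\lambda$ ($i=1,2$). Then there exists a permutation $\tau$ of $[m]$ such that $\sum_{i=1}^m (L\sigma_i(X_1)+d^1_i)(\mu\sigma_{\tau(i)}(X_2)+d^2_{\tau(i)}) + \sum_{i=1}^m (\mu\sigma_i(X_1)+d^1_i)(L\sigma_{\tau(i)}(X_2)+d^2_{\tau(i)}) - \sum_{i=1}^m (\mu\sigma_i(X_1)+d^1_i)(L\sigma_i(X_1)+d^1_i) - \sum_{i=1}^m (\mu\sigma_i(X_2)+d^2_i)(L\sigma_i(X_2)+d^2_i)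 \geq 0$. -/

import Mathlib

open Matrix Finset

attribute [local instance] Matrix.frobeniusNormedAddCommGroup Matrix.frobeniusNormedSpace

def mdot {m n : ℕ} (A B : Matrix (Fin m) (Fin n) ℝ) : ℝ := ∑ i, ∑ j, A i j * B i j

noncomputable def frob {m n : ℕ} (A : Matrix (Fin m) (Fin n) ℝ) : ℝ := Real.sqrt (mdot A A)

def IsOrth {k : ℕ} (R : Matrix (Fin k) (Fin k) ℝ) : Prop := Rᵀ * R = 1

def rdg (a b : ℕ) {c : ℕ} (x : Fin c → ℝ) : Matrix (Fin a) (Fin b) ℝ :=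
  Matrix.of fun i j => if h : (i : ℕ) = (j : ℕ) ∧ (i : ℕ) < c then x ⟨i, h.2⟩ else 0

noncomputable def descSort {k : ℕ} (f : Fin k → ℝ) : Fin k → ℝ := fun i => f (Tuple.sort f i.rev)

noncomputable def sigCol {a r : ℕ} (X : Matrix (Fin a) (Fin r) ℝ) : Fin r → ℝ :=
  descSort fun i => Real.sqrt (((Matrix.isHermitian_conjTranspose_mul_self X : (Xᵀ * X).IsHermitian)).eigenvalues i)

noncomputable def sigRow {a b : ℕ} (X : Matrix (Fin a) (Fin b) ℝ) : Fin a → ℝ :=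
  descSort fun i => Real.sqrt ((Matrix.isHermitian_mul_conjTranspose_self X).eigenvalues i)

noncomputable def toDual {m n : ℕ} (G : Matrix (Fin m) (Fin n) ℝ) :
    Matrix (Fin m) (Fin n) ℝ →L[ℝ] ℝ :=
  LinearMap.toContinuousLinearMap
    { toFun := fun Y => mdot G Y
      map_add' := fun Y Z => by
        simp [mdot, Matrix.add_apply, mul_add, Finset.sum_add_distrib]
      map_smul' := fun c Y => by
        simp [mdot, Matrix.smul_apply, smul_eq_mul, Finset.mul_sum, mul_left_comm] }

noncomputable def enorm2 {k : ℕ} (v : Fin k → ℝ) : ℝ := Real.sqrt (∑ i, v i ^ 2)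

def subdiff {m n : ℕ} (f : Matrix (Fin m) (Fin n) ℝ → ℝ) (X : Matrix (Fin m) (Fin n) ℝ) :
    Set (Matrix (Fin m) (Fin n) ℝ) := {G | ∀ Y, f X + mdot G (Y - X) ≤ f Y}

-- mdot algebra
lemma mdot_comm {m n : ℕ} (A B : Matrix (Fin m) (Fin n) ℝ) : mdot A B = mdot B A := by
  simp [mdot, mul_comm]

lemma mdot_sub_left {m n : ℕ} (A B C : Matrix (Fin m) (Fin n) ℝ) :
    mdot (A - B) C = mdot A C - mdot B C := by
  simp [mdot, sub_mul, Finset.sum_sub_distrib]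

lemma mdot_sub_right {m n : ℕ} (A B C : Matrix (Fin m) (Fin n) ℝ) :
    mdot A (B - C) = mdot A B - mdot A C := by
  simp [mdot, mul_sub, Finset.sum_sub_distrib]

lemma mdot_add_left {m n : ℕ} (A B C : Matrix (Fin m) (Fin n) ℝ) :
    mdot (A + B) C = mdot A C + mdot B C := by
  simp [mdot, add_mul, Finset.sum_add_distrib]

lemma mdot_add_right {m n : ℕ} (A B C : Matrix (Fin m) (Fin n) ℝ) :
    mdot A (B + C) = mdot A B + mdot A C := by
  simp [mdot, mul_add, Finset.sum_add_distrib]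

lemma mdot_smul_left {m n : ℕ} (c : ℝ) (A B : Matrix (Fin m) (Fin n) ℝ) :
    mdot (c • A) B = c * mdot A B := by
  simp [mdot, Finset.mul_sum, mul_assoc]

lemma mdot_smul_right {m n : ℕ} (c : ℝ) (A B : Matrix (Fin m) (Fin n) ℝ) :
    mdot A (c • B) = c * mdot A B := by
  simp [mdot, Finset.mul_sum]; congr 1; ext i; congr 1; ext j; ring

lemma mdot_neg_right {m n : ℕ} (A B : Matrix (Fin m) (Fin n) ℝ) :
    mdot A (-B) = - mdot A B := by
  simp [mdot, Finset.sum_neg_distrib]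

lemma mdot_self_nonneg {m n : ℕ} (A : Matrix (Fin m) (Fin n) ℝ) : 0 ≤ mdot A A := by
  apply Finset.sum_nonneg; intro i _; apply Finset.sum_nonneg; intro j _; exact mul_self_nonneg _

lemma frob_sq {m n : ℕ} (A : Matrix (Fin m) (Fin n) ℝ) : frob A ^ 2 = mdot A A := by
  rw [frob, Real.sq_sqrt (mdot_self_nonneg A)]

lemma mdot_le_frob {m n : ℕ} (A B : Matrix (Fin m) (Fin n) ℝ) : mdot A B ≤ frob A * frob B := by
  have h1 : mdot A B ≤ ∑ p : Fin m × Fin n, |A p.1 p.2| * |B p.1 p.2| := by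
    rw [mdot, ← Fintype.sum_prod_type']
    exact Finset.sum_le_sum (fun p _ => (le_abs_self _).trans (abs_mul _ _).le)
  have h2 := sum_mul_sq_le_sq_mul_sq Finset.univ (fun p : Fin m × Fin n => |A p.1 p.2|)
      (fun p => |B p.1 p.2|)
  simp only [sq_abs] at h2
  have hA : ∑ p : Fin m × Fin n, A p.1 p.2 ^ 2 = mdot A A := by
    rw [mdot, ← Fintype.sum_prod_type']; congr 1; ext p; ring
  have hB : ∑ p : Fin m × Fin n, B p.1 p.2 ^ 2 = mdot B B := by
    rw [mdot, ← Fintype.sum_prod_type']; congr 1; ext p; ring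
  rw [hA, hB] at h2
  have h3 : (∑ p : Fin m × Fin n, |A p.1 p.2| * |B p.1 p.2|) ≤ frob A * frob B := by
    have hnn : (0:ℝ) ≤ ∑ p : Fin m × Fin n, |A p.1 p.2| * |B p.1 p.2| :=
      Finset.sum_nonneg fun p _ => mul_nonneg (abs_nonneg _) (abs_nonneg _)
    have : frob A * frob B = Real.sqrt (mdot A A * mdot B B) := by
      rw [frob, frob, Real.sqrt_mul (mdot_self_nonneg A)]
    rw [this]
    nlinarith [Real.sq_sqrt (mul_nonneg (mdot_self_nonneg A) (mdot_self_nonneg B)),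
      Real.sqrt_nonneg (mdot A A * mdot B B)]
  linarith

lemma frob_nonneg {m n : ℕ} (A : Matrix (Fin m) (Fin n) ℝ) : 0 ≤ frob A := Real.sqrt_nonneg _

lemma frob_smul {m n : ℕ} (c : ℝ) (hc : 0 ≤ c) (A : Matrix (Fin m) (Fin n) ℝ) :
    frob (c • A) = c * frob A := by
  rw [frob, mdot_smul_left, mdot_smul_right, ← mul_assoc, frob,
    Real.sqrt_mul (by positivity), Real.sqrt_mul_self hc]

-- trace representation
lemma mdot_eq_trace {m n : ℕ} (A B : Matrix (Fin m) (Fin n) ℝ) :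
    mdot A B = Matrix.trace (Aᵀ * B) := by
  rw [Matrix.trace]
  simp only [Matrix.diag, Matrix.mul_apply, Matrix.transpose_apply]
  rw [mdot, Finset.sum_comm]

lemma IsOrth.mul_self {k : ℕ} {R : Matrix (Fin k) (Fin k) ℝ} (hR : IsOrth R) :
    R * Rᵀ = 1 := mul_eq_one_comm.mp hR

-- invariance: mdot (R*A*Pᵀ) (R*B*Pᵀ) = mdot A B
lemma mdot_orth {m n : ℕ} (R : Matrix (Fin m) (Fin m) ℝ) (P : Matrix (Fin n) (Fin n) ℝ)
    (hR : IsOrth R) (hP : IsOrth P) (A B : Matrix (Fin m) (Fin n) ℝ) :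
    mdot (R * A * Pᵀ) (R * B * Pᵀ) = mdot A B := by
  rw [mdot_eq_trace, mdot_eq_trace]
  simp only [Matrix.transpose_mul, Matrix.transpose_transpose, Matrix.mul_assoc]
  rw [Matrix.trace_mul_comm]
  simp only [Matrix.mul_assoc]
  rw [hP, Matrix.mul_one, ← Matrix.mul_assoc Rᵀ R, hR, Matrix.one_mul]

-- cross term
lemma mdot_cross {m n : ℕ} (R1 R2 : Matrix (Fin m) (Fin m) ℝ) (P1 P2 : Matrix (Fin n) (Fin n) ℝ)
    (A B : Matrix (Fin m) (Fin n) ℝ) :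
    mdot (R1 * A * P1ᵀ) (R2 * B * P2ᵀ) = mdot A ((R1ᵀ * R2) * B * (P2ᵀ * P1)) := by
  rw [mdot_eq_trace, mdot_eq_trace]
  simp only [Matrix.transpose_mul, Matrix.transpose_transpose, Matrix.mul_assoc]
  rw [Matrix.trace_mul_comm]
  simp only [Matrix.mul_assoc]

-- rdg lemmas
lemma rdg_apply {a b c : ℕ} (x : Fin c → ℝ) (i : Fin a) (j : Fin b) :
    rdg a b x i j = if h : (i : ℕ) = (j : ℕ) ∧ (i : ℕ) < c then x ⟨i, h.2⟩ else 0 := rfl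

lemma rdg_smul {a b c : ℕ} (t : ℝ) (x : Fin c → ℝ) :
    rdg a b (t • x) = t • rdg a b x := by
  ext i j
  simp only [rdg_apply, Matrix.smul_apply, Pi.smul_apply, smul_eq_mul]
  split <;> simp

lemma rdg_add {a b c : ℕ} (x y : Fin c → ℝ) :
    rdg a b (x + y) = rdg a b x + rdg a b y := by
  ext i j
  simp only [rdg_apply, Matrix.add_apply, Pi.add_apply]
  split <;> simp

-- mdot of two rectangular diagonals (m ≤ n)
lemma mdot_rdg_rdg {m n : ℕ} (hmn : m ≤ n) (x y : Fin m → ℝ) :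
    mdot (rdg m n x) (rdg m n y) = ∑ i, x i * y i := by
  rw [mdot]
  apply Finset.sum_congr rfl
  intro i _
  rw [Finset.sum_eq_single (Fin.castLE hmn i)]
  · simp [rdg_apply, Fin.ext_iff, i.isLt]
  · intro j _ hj
    have hij : ¬ (i:ℕ) = (j:ℕ) := fun h1 => hj (by simp [Fin.ext_iff, ← h1])
    simp [rdg_apply, hij]
  · intro hmem; exact absurd (Finset.mem_univ _) hmem

-- mdot rdg against conjugated rdg
lemma mdot_rdg_conj {m n : ℕ} (hmn : m ≤ n) (x y : Fin m → ℝ)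
    (Q : Matrix (Fin m) (Fin m) ℝ) (S : Matrix (Fin n) (Fin n) ℝ) :
    mdot (rdg m n x) (Q * rdg m n y * Sᵀ)
      = ∑ i, ∑ j, (x i * y j) * (Q i j * S (Fin.castLE hmn i) (Fin.castLE hmn j)) := by
  rw [mdot]
  apply Finset.sum_congr rfl
  intro i _
  -- inner sum over Fin n: only j' = castLE i survives on the left factor
  rw [Finset.sum_eq_single (Fin.castLE hmn i)]
  · have hx : rdg m n x i (Fin.castLE hmn i) = x i := by simp [rdg_apply, i.isLt]
    rw [hx]
    have : (Q * rdg m n y * Sᵀ) i (Fin.castLE hmn i)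
        = ∑ j, y j * (Q i j * S (Fin.castLE hmn i) (Fin.castLE hmn j)) := by
      rw [Matrix.mul_apply]
      have hcol : ∀ k : Fin n, (Q * rdg m n y) i k
          = ∑ j : Fin m, Q i j * rdg m n y j k := by
        intro k; rw [Matrix.mul_apply]
      simp only [hcol, Matrix.transpose_apply, Finset.sum_mul]
      rw [Finset.sum_comm]
      apply Finset.sum_congr rfl
      intro j _
      rw [Finset.sum_eq_single (Fin.castLE hmn j)]
      · simp [rdg_apply, j.isLt]; ring
      · intro k _ hk
        have hjk : ¬ (j:ℕ) = (k:ℕ) := fun h1 => hk (by simp [Fin.ext_iff, ← h1])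
        simp [rdg_apply, hjk]
      · intro hmem; exact absurd (Finset.mem_univ _) hmem
    rw [this, Finset.mul_sum]
    apply Finset.sum_congr rfl; intro j _; ring
  · intro k _ hk
    have hik : ¬ (i:ℕ) = (k:ℕ) := fun h1 => hk (by simp [Fin.ext_iff, ← h1])
    simp [rdg_apply, hik]
  · intro hmem; exact absurd (Finset.mem_univ _) hmem


-- mdot_neg_right already proved above

lemma row_sq_one {k : ℕ} (M : Matrix (Fin k) (Fin k) ℝ) (hM : M * Mᵀ = 1) (i : Fin k) :
    ∑ j, M i j ^ 2 = 1 := by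
  have hh := congrFun (congrFun hM i) i
  simp only [Matrix.mul_apply, Matrix.transpose_apply, Matrix.one_apply_eq] at hh
  rw [← hh]
  apply Finset.sum_congr rfl
  intro j _
  ring

lemma abs_rowsum_le_one {m n : ℕ} (hmn : m ≤ n) (q : Fin m → ℝ) (s : Fin n → ℝ)
    (hq : ∑ j, q j ^ 2 = 1) (hs : ∑ j, s j ^ 2 = 1) :
    ∑ j : Fin m, |q j * s (Fin.castLE hmn j)| ≤ 1 := by
  have hsub : ∑ j : Fin m, s (Fin.castLE hmn j) ^ 2 ≤ 1 := by
    rw [← hs]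
    have he : ∑ j : Fin m, s (Fin.castLE hmn j) ^ 2
        = ∑ j ∈ Finset.univ.map (Fin.castLEEmb hmn), s j ^ 2 := by
      rw [Finset.sum_map]; rfl
    rw [he]
    apply Finset.sum_le_sum_of_subset_of_nonneg (Finset.subset_univ _)
    intro j _ _
    positivity
  have hcs := sum_mul_sq_le_sq_mul_sq Finset.univ (fun j : Fin m => |q j|)
    (fun j => |s (Fin.castLE hmn j)|)
  simp only [sq_abs] at hcs
  rw [hq, one_mul] at hcs
  have h1 : (∑ j : Fin m, |q j| * |s (Fin.castLE hmn j)|) ^ 2 ≤ 1 := le_trans hcs hsub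
  have h2 : 0 ≤ ∑ j : Fin m, |q j| * |s (Fin.castLE hmn j)| :=
    Finset.sum_nonneg fun j _ => by positivity
  have h3 : ∑ j : Fin m, |q j * s (Fin.castLE hmn j)|
      = ∑ j : Fin m, |q j| * |s (Fin.castLE hmn j)| := by
    apply Finset.sum_congr rfl
    intro j _
    exact abs_mul _ _
  rw [h3]
  nlinarith [h1, h2]

lemma exists_perm_bound (m : ℕ) (w N : Matrix (Fin m) (Fin m) ℝ)
    (hw : ∀ i j, 0 ≤ w i j) (hN : ∀ i j, 0 ≤ N i j)
    (hrow : ∀ i, ∑ j, N i j ≤ 1) (hcol : ∀ j, ∑ i, N i j ≤ 1) :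
    ∃ τ : Equiv.Perm (Fin m), ∑ i, ∑ j, w i j * N i j ≤ ∑ i, w i (τ i) := by
  rcases Nat.eq_zero_or_pos m with hm | hm
  · subst hm; exact ⟨1, by simp⟩
  -- build doubly stochastic D ≥ N
  set r : Fin m → ℝ := fun i => 1 - ∑ j, N i j with hr
  set c : Fin m → ℝ := fun j => 1 - ∑ i, N i j with hc
  have hrpos : ∀ i, 0 ≤ r i := fun i => by simp [hr]; linarith [hrow i]
  have hcpos : ∀ j, 0 ≤ c j := fun j => by simp [hc]; linarith [hcol j]
  set s : ℝ := ∑ i, r i with hs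
  have hssum : s = ∑ j, c j := by
    simp only [hs, hc, hr, Finset.sum_sub_distrib]
    rw [Finset.sum_comm]
  have hsnn : 0 ≤ s := Finset.sum_nonneg fun i _ => hrpos i
  set D : Matrix (Fin m) (Fin m) ℝ := fun i j => N i j + r i * c j / s with hD
  have hDmem : D ∈ doublyStochastic ℝ (Fin m) := by
    rw [mem_doublyStochastic_iff_sum]
    refine ⟨fun i j => add_nonneg (hN i j) (div_nonneg (mul_nonneg (hrpos i) (hcpos j)) hsnn), ?_, ?_⟩
    · intro i
      rcases eq_or_lt_of_le hsnn with hz | hz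
      · have : ∀ i, r i = 0 := by
          intro i
          have := (Finset.sum_eq_zero_iff_of_nonneg (fun i _ => hrpos i)).mp hz.symm
          exact this i (Finset.mem_univ i)
        simp only [hD, Finset.sum_add_distrib, ← hz, this, div_zero, zero_mul,
          Finset.sum_const, smul_eq_mul, mul_zero, add_zero]
        have := this i
        simp only [hr] at this
        linarith
      · simp only [hD, Finset.sum_add_distrib]
        rw [← Finset.sum_div, ← Finset.mul_sum, ← hssum]
        have : r i * s / s = r i := by field_simp
        rw [this]
        simp [hr]
    · intro j
      rcases eq_or_lt_of_le hsnn with hz | hz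
      · have hcz : ∀ j, c j = 0 := by
          intro j
          have hz' : ∑ j, c j = 0 := by rw [← hssum, ← hz]
          have := (Finset.sum_eq_zero_iff_of_nonneg (fun j _ => hcpos j)).mp hz'
          exact this j (Finset.mem_univ j)
        simp only [hD, Finset.sum_add_distrib, hcz, mul_zero, zero_div,
          Finset.sum_const, smul_eq_mul, add_zero]
        have := hcz j
        simp only [hc] at this
        linarith
      · simp only [hD, Finset.sum_add_distrib]
        rw [← Finset.sum_div, ← Finset.sum_mul, ← hs]
        have : s * c j / s = c j := by field_simp
        rw [this]
        simp [hc]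
  -- linear functional
  have key : ∃ P ∈ {σ.permMatrix ℝ | σ : Equiv.Perm (Fin m)},
      ∑ i, ∑ j, w i j * D i j ≤ ∑ i, ∑ j, w i j * P i j := by
    have hconv : ConvexOn ℝ Set.univ (fun M : Matrix (Fin m) (Fin m) ℝ =>
        ∑ i, ∑ j, w i j * M i j) := by
      refine ⟨convex_univ, ?_⟩
      intro x _ y _ a b _ _ _
      apply le_of_eq
      simp only [smul_eq_mul]
      rw [Finset.mul_sum, Finset.mul_sum, ← Finset.sum_add_distrib]
      refine Finset.sum_congr rfl fun i _ => ?_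
      rw [Finset.mul_sum, Finset.mul_sum, ← Finset.sum_add_distrib]
      refine Finset.sum_congr rfl fun j _ => ?_
      simp only [Matrix.add_apply, Matrix.smul_apply, smul_eq_mul]
      ring
    have hmem : D ∈ convexHull ℝ {σ.permMatrix ℝ | σ : Equiv.Perm (Fin m)} := by
      rw [← doublyStochastic_eq_convexHull_permMatrix]
      exact hDmem
    exact hconv.exists_ge_of_mem_convexHull (Set.subset_univ _) hmem
  obtain ⟨P, ⟨τ, rfl⟩, hP⟩ := key
  refine ⟨τ, ?_⟩
  have h1 : ∑ i, ∑ j, w i j * N i j ≤ ∑ i, ∑ j, w i j * D i j := by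
    apply Finset.sum_le_sum; intro i _; apply Finset.sum_le_sum; intro j _
    have : N i j ≤ D i j := by
      simp only [hD]; have : 0 ≤ r i * c j / s := div_nonneg (mul_nonneg (hrpos i) (hcpos j)) hsnn
      linarith
    exact mul_le_mul_of_nonneg_left this (hw i j)
  have h2 : ∑ i, ∑ j, w i j * (τ.permMatrix ℝ) i j = ∑ i, w i (τ i) := by
    apply Finset.sum_congr rfl; intro i _
    rw [Finset.sum_eq_single (τ i)]
    · simp [Equiv.Perm.permMatrix, PEquiv.toMatrix, Equiv.toPEquiv_apply]
    · intro j _ hj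
      simp [Equiv.Perm.permMatrix, PEquiv.toMatrix, Equiv.toPEquiv_apply, hj.symm]
    · intro hmem; exact absurd (Finset.mem_univ _) hmem
  linarith

section Analysis

variable {m n : ℕ} (mu L : ℝ)
  (h : Matrix (Fin m) (Fin n) ℝ → ℝ)
  (G : Matrix (Fin m) (Fin n) ℝ → Matrix (Fin m) (Fin n) ℝ)

lemma toDual_apply (A Y : Matrix (Fin m) (Fin n) ℝ) : toDual A Y = mdot A Y := rfl

lemma hasDerivAt_line (hgrad : ∀ X, HasFDerivAt h (toDual (G X)) X)
    (X Δ : Matrix (Fin m) (Fin n) ℝ) (t₀ : ℝ) :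
    HasDerivAt (fun t : ℝ => h (X + t • Δ)) (mdot (G (X + t₀ • Δ)) Δ) t₀ := by
  have hcurve : HasDerivAt (fun t : ℝ => X + t • Δ) Δ t₀ := by
    have h0 := ((hasDerivAt_id t₀).smul_const Δ).const_add X
    simp only [id, one_smul] at h0
    exact h0
  have := (hgrad (X + t₀ • Δ)).comp_hasDerivAt t₀ hcurve
  exact this

lemma mdot_expand (X Δ : Matrix (Fin m) (Fin n) ℝ) (t : ℝ) :
    mdot (X + t • Δ) (X + t • Δ)
      = mdot X X + 2 * t * mdot X Δ + t ^ 2 * mdot Δ Δ := by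
  rw [mdot_add_left, mdot_add_right, mdot_add_right, mdot_smul_left, mdot_smul_left,
    mdot_smul_right, mdot_smul_right, mdot_comm Δ X]
  ring

-- derivative along line of k = h - mu/2 * ||.||^2
lemma hasDerivAt_kline (hgrad : ∀ X, HasFDerivAt h (toDual (G X)) X)
    (X Δ : Matrix (Fin m) (Fin n) ℝ) (t₀ : ℝ) :
    HasDerivAt (fun t : ℝ => h (X + t • Δ) - mu / 2 * mdot (X + t • Δ) (X + t • Δ))
      (mdot (G (X + t₀ • Δ) - mu • (X + t₀ • Δ)) Δ) t₀ := by
  have h1 := hasDerivAt_line h G hgrad X Δ t₀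
  have h2 : HasDerivAt (fun t : ℝ => mu / 2 * (mdot X X + 2 * t * mdot X Δ + t ^ 2 * mdot Δ Δ))
      (mu / 2 * (2 * mdot X Δ + 2 * t₀ * mdot Δ Δ)) t₀ := by
    have : HasDerivAt (fun t : ℝ => mdot X X + 2 * t * mdot X Δ + t ^ 2 * mdot Δ Δ)
        (2 * mdot X Δ + 2 * t₀ * mdot Δ Δ) t₀ := by
      have ha : HasDerivAt (fun t : ℝ => 2 * t * mdot X Δ) (2 * mdot X Δ) t₀ := by
        simpa [mul_comm, mul_assoc] using
          ((hasDerivAt_id t₀).const_mul (2 : ℝ)).mul_const (mdot X Δ)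
      have hb : HasDerivAt (fun t : ℝ => t ^ 2 * mdot Δ Δ) (2 * t₀ * mdot Δ Δ) t₀ := by
        simpa [mul_comm, mul_assoc] using (hasDerivAt_pow 2 t₀).mul_const (mdot Δ Δ)
      exact ((ha.const_add (mdot X X)).add hb)
    simpa using this.const_mul (mu / 2)
  have h3 := h1.sub h2
  have heq : ∀ t : ℝ, h (X + t • Δ) - mu / 2 * mdot (X + t • Δ) (X + t • Δ)
      = h (X + t • Δ) - mu / 2 * (mdot X X + 2 * t * mdot X Δ + t ^ 2 * mdot Δ Δ) := by
    intro t; rw [mdot_expand]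
  have hval : mdot (G (X + t₀ • Δ) - mu • (X + t₀ • Δ)) Δ
      = mdot (G (X + t₀ • Δ)) Δ - mu / 2 * (2 * mdot X Δ + 2 * t₀ * mdot Δ Δ) := by
    rw [mdot_sub_left, mdot_smul_left, mdot_add_left, mdot_smul_left]
    ring
  rw [hval]
  exact HasDerivAt.congr_deriv (h3.congr_of_eventuallyEq (Filter.Eventually.of_forall
    (fun t => (heq t)))) rfl

-- L1: gradient inequality for the convex function k
lemma grad_ineq (hgrad : ∀ X, HasFDerivAt h (toDual (G X)) X)
    (hsc : ConvexOn ℝ Set.univ fun X => h X - mu / 2 * mdot X X)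
    (X Y : Matrix (Fin m) (Fin n) ℝ) :
    mdot (G X - mu • X) (Y - X)
      ≤ (h Y - mu / 2 * mdot Y Y) - (h X - mu / 2 * mdot X X) := by
  set Δ := Y - X with hΔ
  set ψ : ℝ → ℝ := fun t => h (X + t • Δ) - mu / 2 * mdot (X + t • Δ) (X + t • Δ) with hψ
  have hconv : ConvexOn ℝ Set.univ ψ := by
    have := hsc.comp_affineMap (AffineMap.lineMap X Y : ℝ →ᵃ[ℝ] Matrix (Fin m) (Fin n) ℝ)
    have he : ∀ t : ℝ, (AffineMap.lineMap X Y : ℝ →ᵃ[ℝ] _) t = X + t • Δ := by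
      intro t; simp only [AffineMap.lineMap_apply_module, hΔ]; module
    simp only [Set.preimage_univ] at this
    have hfun : ψ = ((fun X => h X - mu / 2 * mdot X X) ∘
        ⇑(AffineMap.lineMap X Y : ℝ →ᵃ[ℝ] Matrix (Fin m) (Fin n) ℝ)) := by
      funext t
      simp [ψ, Function.comp, he t]
    rw [hfun]; exact this
  have hd : HasDerivAt ψ (mdot (G X - mu • X) Δ) 0 := by
    have := hasDerivAt_kline mu h G hgrad X Δ 0
    simpa using this
  have hslope := hconv.le_slope_of_hasDerivAt (Set.mem_univ (0:ℝ)) (Set.mem_univ (1:ℝ))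
    one_pos hd
  have : slope ψ 0 1 = ψ 1 - ψ 0 := by
    rw [slope_def_field]; simp
  rw [this] at hslope
  have hψ1 : ψ 1 = h Y - mu / 2 * mdot Y Y := by simp [ψ, hΔ]
  have hψ0 : ψ 0 = h X - mu / 2 * mdot X X := by simp [ψ]
  rw [hψ1, hψ0] at hslope
  exact hslope

end Analysis

lemma mdot_neg_left {m n : ℕ} (A B : Matrix (Fin m) (Fin n) ℝ) : mdot (-A) B = - mdot A B := by
  simp [mdot, Finset.sum_neg_distrib]

section Analysis2

variable {m n : ℕ} {mu L : ℝ}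
  {h : Matrix (Fin m) (Fin n) ℝ → ℝ}
  {G : Matrix (Fin m) (Fin n) ℝ → Matrix (Fin m) (Fin n) ℝ}

-- L2: descent lemma for k = h - mu/2 ||.||², with constant L - mu
lemma descent_ineq (hmu : 0 < mu) (hLmu : mu ≤ L)
    (hgrad : ∀ X, HasFDerivAt h (toDual (G X)) X)
    (hlip : ∀ X Y, frob (G X - G Y) ≤ L * frob (X - Y))
    (X Y : Matrix (Fin m) (Fin n) ℝ) :
    (h Y - mu / 2 * mdot Y Y)
      ≤ (h X - mu / 2 * mdot X X) + mdot (G X - mu • X) (Y - X)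
        + (L - mu) / 2 * mdot (Y - X) (Y - X) := by
  set Δ := Y - X with hΔ
  set k : Matrix (Fin m) (Fin n) ℝ → ℝ := fun Z => h Z - mu / 2 * mdot Z Z with hk
  set χ : ℝ → ℝ := fun t => k (X + t • Δ) - t * mdot (G X - mu • X) Δ
      - (L - mu) / 2 * t ^ 2 * mdot Δ Δ with hχ
  have hd : ∀ t : ℝ, HasDerivAt χ
      (mdot (G (X + t • Δ) - mu • (X + t • Δ)) Δ - mdot (G X - mu • X) Δ
        - (L - mu) * t * mdot Δ Δ) t := by
    intro t
    have h1 := hasDerivAt_kline mu h G hgrad X Δ t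
    have h2 : HasDerivAt (fun t : ℝ => t * mdot (G X - mu • X) Δ)
        (mdot (G X - mu • X) Δ) t := by
      simpa using (hasDerivAt_id t).mul_const (mdot (G X - mu • X) Δ)
    have h3 : HasDerivAt (fun t : ℝ => (L - mu) / 2 * t ^ 2 * mdot Δ Δ)
        ((L - mu) * t * mdot Δ Δ) t := by
      have h4 : HasDerivAt (fun t : ℝ => t ^ 2) (2 * t) t := by
        simpa using hasDerivAt_pow 2 t
      have h5 := (h4.const_mul ((L - mu) / 2)).mul_const (mdot Δ Δ)
      have he : (L - mu) / 2 * (2 * t) * mdot Δ Δ = (L - mu) * t * mdot Δ Δ := by ring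
      rwa [he] at h5
    exact (h1.sub h2).sub h3
  have hderiv_nonpos : ∀ t ∈ Set.Ioo (0:ℝ) 1, deriv χ t ≤ 0 := by
    intro t ht
    rw [(hd t).deriv]
    have hkey : mdot (G (X + t • Δ) - G X) Δ ≤ L * t * mdot Δ Δ := by
      have h1 : mdot (G (X + t • Δ) - G X) Δ ≤ frob (G (X + t • Δ) - G X) * frob Δ :=
        mdot_le_frob _ _
      have h2 : frob (G (X + t • Δ) - G X) ≤ L * frob (X + t • Δ - X) := hlip _ _
      have h3 : X + t • Δ - X = t • Δ := by abel
      have h4 : frob (t • Δ) = t * frob Δ := frob_smul t ht.1.le Δ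
      rw [h3, h4] at h2
      have h5 : frob (G (X + t • Δ) - G X) * frob Δ ≤ L * (t * frob Δ) * frob Δ :=
        mul_le_mul_of_nonneg_right h2 (frob_nonneg Δ)
      have h6 : L * (t * frob Δ) * frob Δ = L * t * (frob Δ * frob Δ) := by ring
      have h7 : frob Δ * frob Δ = mdot Δ Δ := by
        have := frob_sq Δ; nlinarith [this]
      rw [h6, h7] at h5
      linarith
    have hexp : mdot (G (X + t • Δ) - mu • (X + t • Δ)) Δ - mdot (G X - mu • X) Δ
        = mdot (G (X + t • Δ) - G X) Δ - mu * t * mdot Δ Δ := by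
      simp only [mdot_sub_left, mdot_smul_left, mdot_add_left]
      ring
    rw [hexp]
    nlinarith [hkey, ht.1.le]
  have hanti : AntitoneOn χ (Set.Icc (0:ℝ) 1) := by
    apply antitoneOn_of_deriv_nonpos (convex_Icc 0 1)
    · exact fun t _ => ((hd t).continuousAt).continuousWithinAt
    · intro t ht
      exact ((hd t).differentiableAt).differentiableWithinAt
    · intro t ht
      rw [interior_Icc] at ht
      exact hderiv_nonpos t ht
  have h01 := hanti (Set.mem_Icc.mpr ⟨le_refl 0, zero_le_one⟩)
    (Set.mem_Icc.mpr ⟨zero_le_one, le_refl 1⟩) zero_le_one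
  have hχ1 : χ 1 = k Y - mdot (G X - mu • X) Δ - (L - mu) / 2 * mdot Δ Δ := by
    simp [hχ, hΔ]
  have hχ0 : χ 0 = k X := by simp [hχ]
  rw [hχ1, hχ0] at h01
  simp only [hk] at h01 ⊢
  linarith

-- cocoercivity building block (case mu < L)
lemma coco (hmu : 0 < mu) (hLmu : mu ≤ L) (hLt : mu < L)
    (hgrad : ∀ X, HasFDerivAt h (toDual (G X)) X)
    (hsc : ConvexOn ℝ Set.univ fun X => h X - mu / 2 * mdot X X)
    (hlip : ∀ X Y, frob (G X - G Y) ≤ L * frob (X - Y))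
    (A B : Matrix (Fin m) (Fin n) ℝ) :
    (h A - mu / 2 * mdot A A) + mdot (G A - mu • A) (B - A)
      + 1 / (2 * (L - mu)) * mdot ((G B - mu • B) - (G A - mu • A))
          ((G B - mu • B) - (G A - mu • A))
      ≤ (h B - mu / 2 * mdot B B) := by
  set L' := L - mu with hL'
  have hL'pos : 0 < L' := by simp only [hL']; linarith
  set E := (G B - mu • B) - (G A - mu • A) with hE
  set Y := B - (1 / L') • E with hY
  have hdes := descent_ineq hmu hLmu hgrad hlip B Y
  have hgi := grad_ineq mu h G hgrad hsc A Y
  have hYB : Y - B = -((1 / L') • E) := by rw [hY]; abel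
  have hmY : mdot (G B - mu • B) (Y - B) = -(1 / L' * mdot (G B - mu • B) E) := by
    rw [hYB, mdot_neg_right, mdot_smul_right]
  have hmYY : mdot (Y - B) (Y - B) = (1 / L') ^ 2 * mdot E E := by
    rw [hYB, mdot_neg_left, mdot_neg_right, mdot_smul_left, mdot_smul_right]
    ring
  have hgiY : mdot (G A - mu • A) (Y - A)
      = mdot (G A - mu • A) (B - A) - 1 / L' * mdot (G A - mu • A) E := by
    have hYA : Y - A = (B - A) - (1 / L') • E := by rw [hY]; abel
    rw [hYA, mdot_sub_right, mdot_smul_right]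
  have hEE : 1 / L' * mdot (G B - mu • B) E - 1 / L' * mdot (G A - mu • A) E
      = 1 / L' * mdot E E := by
    rw [← mul_sub, ← mdot_sub_left, ← hE]
  rw [hmY, hmYY] at hdes
  rw [hgiY] at hgi
  have hfin : 1 / L' * mdot E E - L' / 2 * ((1 / L') ^ 2 * mdot E E)
      = 1 / (2 * L') * mdot E E := by
    field_simp
    ring
  have hL2 : (L - mu) / 2 * ((1 / L') ^ 2 * mdot E E) = L' / 2 * ((1 / L') ^ 2 * mdot E E) := by
    rw [hL']
  linarith [hdes, hgi, hEE, hfin, hL2]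

-- expansion helpers
lemma mdot_pair_expand {m n : ℕ} (a b : ℝ) (U V : Matrix (Fin m) (Fin n) ℝ) :
    mdot (a • U - V) (b • U - V) = a * b * mdot U U - (a + b) * mdot V U + mdot V V := by
  simp only [mdot_sub_left, mdot_sub_right, mdot_smul_left, mdot_smul_right]
  rw [mdot_comm U V]
  ring

lemma mdot_Vsub {m n : ℕ} (a : ℝ) (U V : Matrix (Fin m) (Fin n) ℝ) :
    mdot (V - a • U) U = mdot V U - a * mdot U U := by
  simp only [mdot_sub_left, mdot_smul_left]

lemma mdot_VV {m n : ℕ} (a : ℝ) (U V : Matrix (Fin m) (Fin n) ℝ) :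
    mdot (V - a • U) (V - a • U) = mdot V V - 2 * a * mdot V U + a ^ 2 * mdot U U := by
  simp only [mdot_sub_left, mdot_sub_right, mdot_smul_left, mdot_smul_right]
  rw [mdot_comm U V]
  ring

-- L3: the key inequality
lemma key_ineq (hmu : 0 < mu) (hLmu : mu ≤ L)
    (hgrad : ∀ X, HasFDerivAt h (toDual (G X)) X)
    (hsc : ConvexOn ℝ Set.univ fun X => h X - mu / 2 * mdot X X)
    (hlip : ∀ X Y, frob (G X - G Y) ≤ L * frob (X - Y))
    (X1 X2 : Matrix (Fin m) (Fin n) ℝ) :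
    mdot (mu • (X1 - X2) - (G X1 - G X2)) (L • (X1 - X2) - (G X1 - G X2)) ≤ 0 := by
  rw [mdot_pair_expand]
  set t2 := mdot (X1 - X2) (X1 - X2) with ht2
  set p := mdot (G X1 - G X2) (X1 - X2) with hp
  set g2 := mdot (G X1 - G X2) (G X1 - G X2) with hg2
  have hgd : mdot (G X1 - mu • X1 - (G X2 - mu • X2)) (X1 - X2) = p - mu * t2 := by
    have e : G X1 - mu • X1 - (G X2 - mu • X2) = (G X1 - G X2) - mu • (X1 - X2) := by
      module
    rw [e, mdot_Vsub]
  have hmono : mu * t2 ≤ p := by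
    have h1 := grad_ineq mu h G hgrad hsc X1 X2
    have h2 := grad_ineq mu h G hgrad hsc X2 X1
    have e1 : X2 - X1 = -(X1 - X2) := by abel
    rw [e1, mdot_neg_right] at h1
    have hsum : 0 ≤ mdot (G X1 - mu • X1) (X1 - X2) - mdot (G X2 - mu • X2) (X1 - X2) := by
      linarith [h1, h2]
    rw [← mdot_sub_left] at hsum
    rw [hgd] at hsum
    linarith
  have hfrob2 : frob (G X1 - G X2) * frob (G X1 - G X2) = g2 := by
    have := frob_sq (G X1 - G X2); rw [hg2]; nlinarith [this]
  have hfrob1 : frob (X1 - X2) * frob (X1 - X2) = t2 := by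
    have := frob_sq (X1 - X2); rw [ht2]; nlinarith [this]
  rcases eq_or_lt_of_le hLmu with hEq | hLt
  · -- L = mu case
    have hlipsq : g2 ≤ L * L * t2 := by
      have h1 := hlip X1 X2
      have h2 : frob (G X1 - G X2) * frob (G X1 - G X2)
          ≤ (L * frob (X1 - X2)) * (L * frob (X1 - X2)) :=
        mul_le_mul h1 h1 (frob_nonneg _) (mul_nonneg (by linarith) (frob_nonneg _))
      rw [hfrob2] at h2
      nlinarith [h2, hfrob1]
    rw [← hEq] at hlipsq ⊢
    nlinarith [hmono, hlipsq, hmu]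
  · -- mu < L case
    set L' := L - mu with hL'
    have hL'pos : 0 < L' := by simp only [hL']; linarith
    have co1 := coco hmu hLmu hLt hgrad hsc hlip X1 X2
    have co2 := coco hmu hLmu hLt hgrad hsc hlip X2 X1
    rw [← hL'] at co1 co2
    set E := (G X2 - mu • X2) - (G X1 - mu • X1) with hE
    have hEsym : mdot ((G X1 - mu • X1) - (G X2 - mu • X2)) ((G X1 - mu • X1) - (G X2 - mu • X2))
        = mdot E E := by
      have e : (G X1 - mu • X1) - (G X2 - mu • X2) = -E := by rw [hE]; abel
      rw [e, mdot_neg_left, mdot_neg_right]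
      ring
    rw [hEsym] at co2
    have e1 : X2 - X1 = -(X1 - X2) := by abel
    rw [e1, mdot_neg_right] at co1
    have hsum : 1 / L' * mdot E E
        ≤ mdot (G X1 - mu • X1) (X1 - X2) - mdot (G X2 - mu • X2) (X1 - X2) := by
      have hh : 1 / (2 * L') + 1 / (2 * L') = 1 / L' := by
        rw [← add_div, div_eq_div_iff (by positivity : (0:ℝ) < 2*L').ne' hL'pos.ne']
        ring
      have hh' : 1 / (2 * L') * mdot E E + 1 / (2 * L') * mdot E E = 1 / L' * mdot E E := by
        rw [← add_mul, hh]
      linarith [co1, co2, hh']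
    rw [← mdot_sub_left, hgd] at hsum
    have hEexp : mdot E E = g2 - 2 * mu * p + mu ^ 2 * t2 := by
      have e : E = -((G X1 - G X2) - mu • (X1 - X2)) := by rw [hE]; module
      rw [e, mdot_neg_left, mdot_neg_right, neg_neg, mdot_VV, hp, ht2, hg2]
    rw [hEexp] at hsum
    have hD : g2 - 2 * mu * p + mu ^ 2 * t2 ≤ (p - mu * t2) * L' := by
      have h0 : g2 - 2 * mu * p + mu ^ 2 * t2
          = L' * (1 / L' * (g2 - 2 * mu * p + mu ^ 2 * t2)) := by
        field_simp
      have h1 : L' * (1 / L' * (g2 - 2 * mu * p + mu ^ 2 * t2)) ≤ L' * (p - mu * t2) :=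
        mul_le_mul_of_nonneg_left hsum hL'pos.le
      rw [← h0] at h1
      linarith [h1]
    have hLL : (p - mu * t2) * L' = (p - mu * t2) * (L - mu) := by rw [hL']
    nlinarith [hD, hLL]

end Analysis2

theorem pseudo_stationary_singular_value_inequality (m n : ℕ) (hmn : m ≤ n)
    (mu L lam : ℝ) (hmu : 0 < mu) (hL : mu ≤ L) (hlam : 0 < lam)
    (h : Matrix (Fin m) (Fin n) ℝ → ℝ)
    (G : Matrix (Fin m) (Fin n) ℝ → Matrix (Fin m) (Fin n) ℝ)
    (hC1 : ContDiff ℝ 1 h)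
    (hgrad : ∀ X, HasFDerivAt h (toDual (G X)) X)
    (hsc : ConvexOn ℝ Set.univ fun X => h X - mu / 2 * mdot X X)
    (hlip : ∀ X Y, frob (G X - G Y) ≤ L * frob (X - Y))
    (X1 X2 : Matrix (Fin m) (Fin n) ℝ)
    (R1 R2 : Matrix (Fin m) (Fin m) ℝ) (P1 P2 : Matrix (Fin n) (Fin n) ℝ)
    (d1 d2 : Fin m → ℝ)
    (hR1 : IsOrth R1) (hP1 : IsOrth P1) (hR2 : IsOrth R2) (hP2 : IsOrth P2)
    (hX1 : X1 = R1 * rdg m n (sigRow X1) * P1ᵀ)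
    (hG1 : G X1 = -(R1 * rdg m n d1 * P1ᵀ))
    (hd1pos : ∀ i, 0 ≤ d1 i)
    (hd1lam : ∀ i : Fin m, (i : ℕ) < X1.rank → d1 i = lam)
    (hX2 : X2 = R2 * rdg m n (sigRow X2) * P2ᵀ)
    (hG2 : G X2 = -(R2 * rdg m n d2 * P2ᵀ))
    (hd2pos : ∀ i, 0 ≤ d2 i)
    (hd2lam : ∀ i : Fin m, (i : ℕ) < X2.rank → d2 i = lam) :
    ∃ τ : Equiv.Perm (Fin m),
      0 ≤ (∑ i, (L * sigRow X1 i + d1 i) * (mu * sigRow X2 (τ i) + d2 (τ i)))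
        + (∑ i, (mu * sigRow X1 i + d1 i) * (L * sigRow X2 (τ i) + d2 (τ i)))
        - (∑ i, (mu * sigRow X1 i + d1 i) * (L * sigRow X1 i + d1 i))
        - (∑ i, (mu * sigRow X2 i + d2 i) * (L * sigRow X2 i + d2 i)) := by
  set s1 := sigRow X1 with hs1
  set s2 := sigRow X2 with hs2
  have hs1nn : ∀ i, 0 ≤ s1 i := fun i => by
    rw [hs1]; simp only [sigRow, descSort]; exact Real.sqrt_nonneg _
  have hs2nn : ∀ i, 0 ≤ s2 i := fun i => by
    rw [hs2]; simp only [sigRow, descSort]; exact Real.sqrt_nonneg _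
  -- the four matrices
  have conv1 : ∀ (t : ℝ) (v d : Fin m → ℝ), (fun i => t * v i + d i) = t • v + d := by
    intro t v d; funext i; simp
  have hA1 : mu • X1 - G X1 = R1 * rdg m n (fun i => mu * s1 i + d1 i) * P1ᵀ := by
    rw [hG1, hX1, conv1, rdg_add, rdg_smul, sub_neg_eq_add]
    simp only [Matrix.mul_add, Matrix.add_mul, Matrix.mul_smul, Matrix.smul_mul]
  have hB1 : L • X1 - G X1 = R1 * rdg m n (fun i => L * s1 i + d1 i) * P1ᵀ := by
    rw [hG1, hX1, conv1, rdg_add, rdg_smul, sub_neg_eq_add]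
    simp only [Matrix.mul_add, Matrix.add_mul, Matrix.mul_smul, Matrix.smul_mul]
  have hA2 : mu • X2 - G X2 = R2 * rdg m n (fun i => mu * s2 i + d2 i) * P2ᵀ := by
    rw [hG2, hX2, conv1, rdg_add, rdg_smul, sub_neg_eq_add]
    simp only [Matrix.mul_add, Matrix.add_mul, Matrix.mul_smul, Matrix.smul_mul]
  have hB2 : L • X2 - G X2 = R2 * rdg m n (fun i => L * s2 i + d2 i) * P2ᵀ := by
    rw [hG2, hX2, conv1, rdg_add, rdg_smul, sub_neg_eq_add]
    simp only [Matrix.mul_add, Matrix.add_mul, Matrix.mul_smul, Matrix.smul_mul]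
  -- key analytic inequality
  have hkey := key_ineq hmu hL hgrad hsc hlip X1 X2
  have split1 : mu • (X1 - X2) - (G X1 - G X2) = (mu • X1 - G X1) - (mu • X2 - G X2) := by
    module
  have split2 : L • (X1 - X2) - (G X1 - G X2) = (L • X1 - G X1) - (L • X2 - G X2) := by
    module
  rw [split1, split2, hA1, hA2, hB1, hB2, mdot_sub_left, mdot_sub_right, mdot_sub_right]
    at hkey
  -- diagonal terms
  have t11 : mdot (R1 * rdg m n (fun i => mu * s1 i + d1 i) * P1ᵀ)
      (R1 * rdg m n (fun i => L * s1 i + d1 i) * P1ᵀ)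
      = ∑ i, (mu * s1 i + d1 i) * (L * s1 i + d1 i) := by
    rw [mdot_orth R1 P1 hR1 hP1, mdot_rdg_rdg hmn]
  have t22 : mdot (R2 * rdg m n (fun i => mu * s2 i + d2 i) * P2ᵀ)
      (R2 * rdg m n (fun i => L * s2 i + d2 i) * P2ᵀ)
      = ∑ i, (mu * s2 i + d2 i) * (L * s2 i + d2 i) := by
    rw [mdot_orth R2 P2 hR2 hP2, mdot_rdg_rdg hmn]
  -- cross terms
  set Q : Matrix (Fin m) (Fin m) ℝ := R1ᵀ * R2 with hQ
  set S : Matrix (Fin n) (Fin n) ℝ := P1ᵀ * P2 with hS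
  have hSt : P2ᵀ * P1 = Sᵀ := by
    rw [hS, Matrix.transpose_mul, Matrix.transpose_transpose]
  have t12 : mdot (R1 * rdg m n (fun i => mu * s1 i + d1 i) * P1ᵀ)
      (R2 * rdg m n (fun i => L * s2 i + d2 i) * P2ᵀ)
      = ∑ i, ∑ j, ((mu * s1 i + d1 i) * (L * s2 j + d2 j))
          * (Q i j * S (Fin.castLE hmn i) (Fin.castLE hmn j)) := by
    rw [mdot_cross, hSt, ← hQ, mdot_rdg_conj hmn]
  have t21 : mdot (R2 * rdg m n (fun i => mu * s2 i + d2 i) * P2ᵀ)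
      (R1 * rdg m n (fun i => L * s1 i + d1 i) * P1ᵀ)
      = ∑ i, ∑ j, ((L * s1 i + d1 i) * (mu * s2 j + d2 j))
          * (Q i j * S (Fin.castLE hmn i) (Fin.castLE hmn j)) := by
    rw [mdot_comm, mdot_cross, hSt, ← hQ, mdot_rdg_conj hmn]
  rw [t11, t22, t12, t21] at hkey
  -- orthogonality facts for Q and S
  have hQQt : Q * Qᵀ = 1 := by
    rw [hQ]
    simp only [Matrix.transpose_mul, Matrix.transpose_transpose, Matrix.mul_assoc]
    rw [← Matrix.mul_assoc R2 R2ᵀ R1, hR2.mul_self, Matrix.one_mul, hR1]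
  have hQtQ : Qᵀ * Q = 1 := by
    rw [hQ]
    simp only [Matrix.transpose_mul, Matrix.transpose_transpose, Matrix.mul_assoc]
    rw [← Matrix.mul_assoc R1 R1ᵀ R2, hR1.mul_self, Matrix.one_mul, hR2]
  have hSSt : S * Sᵀ = 1 := by
    rw [hS]
    simp only [Matrix.transpose_mul, Matrix.transpose_transpose, Matrix.mul_assoc]
    rw [← Matrix.mul_assoc P2 P2ᵀ P1, hP2.mul_self, Matrix.one_mul, hP1]
  have hStS : Sᵀ * S = 1 := by
    rw [hS]
    simp only [Matrix.transpose_mul, Matrix.transpose_transpose, Matrix.mul_assoc]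
    rw [← Matrix.mul_assoc P1 P1ᵀ P2, hP1.mul_self, Matrix.one_mul, hP2]
  -- nonnegativity of the weights
  have ha : ∀ i, 0 ≤ mu * s1 i + d1 i := fun i =>
    add_nonneg (mul_nonneg hmu.le (hs1nn i)) (hd1pos i)
  have hb : ∀ i, 0 ≤ L * s1 i + d1 i := fun i =>
    add_nonneg (mul_nonneg (by linarith) (hs1nn i)) (hd1pos i)
  have hc : ∀ i, 0 ≤ mu * s2 i + d2 i := fun i =>
    add_nonneg (mul_nonneg hmu.le (hs2nn i)) (hd2pos i)
  have he : ∀ i, 0 ≤ L * s2 i + d2 i := fun i =>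
    add_nonneg (mul_nonneg (by linarith) (hs2nn i)) (hd2pos i)
  -- weight matrix and substochastic matrix
  set w : Matrix (Fin m) (Fin m) ℝ := fun i j =>
    (mu * s1 i + d1 i) * (L * s2 j + d2 j) + (L * s1 i + d1 i) * (mu * s2 j + d2 j) with hw
  set N : Matrix (Fin m) (Fin m) ℝ := fun i j =>
    |Q i j * S (Fin.castLE hmn i) (Fin.castLE hmn j)| with hN
  have hwnn : ∀ i j, 0 ≤ w i j := fun i j =>
    add_nonneg (mul_nonneg (ha i) (he j)) (mul_nonneg (hb i) (hc j))
  have hNnn : ∀ i j, 0 ≤ N i j := fun i j => abs_nonneg _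
  have hrow : ∀ i, ∑ j, N i j ≤ 1 := by
    intro i
    apply abs_rowsum_le_one hmn (fun j => Q i j) (fun j => S (Fin.castLE hmn i) j)
    · exact row_sq_one Q hQQt i
    · exact row_sq_one S hSSt (Fin.castLE hmn i)
  have hcol : ∀ j, ∑ i, N i j ≤ 1 := by
    intro j
    have := abs_rowsum_le_one hmn (fun i => Qᵀ j i) (fun i => Sᵀ (Fin.castLE hmn j) i)
      (by
        have := row_sq_one Qᵀ (by rw [Matrix.transpose_transpose]; exact hQtQ) j
        simpa using this)
      (by
        have := row_sq_one Sᵀ (by rw [Matrix.transpose_transpose]; exact hStS)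
          (Fin.castLE hmn j)
        simpa using this)
    simpa [Matrix.transpose_apply, mul_comm, hN, abs_mul] using this
  obtain ⟨τ, hτ⟩ := exists_perm_bound m w N hwnn hNnn hrow hcol
  refine ⟨τ, ?_⟩
  -- chain of inequalities
  have step1 : ∑ i, ∑ j, w i j * (Q i j * S (Fin.castLE hmn i) (Fin.castLE hmn j))
      ≤ ∑ i, ∑ j, w i j * N i j := by
    apply Finset.sum_le_sum
    intro i _
    apply Finset.sum_le_sum
    intro j _
    exact mul_le_mul_of_nonneg_left (le_abs_self _) (hwnn i j)
  have step0 : (∑ i, (mu * s1 i + d1 i) * (L * s1 i + d1 i))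
      + (∑ i, (mu * s2 i + d2 i) * (L * s2 i + d2 i))
      ≤ ∑ i, ∑ j, w i j * (Q i j * S (Fin.castLE hmn i) (Fin.castLE hmn j)) := by
    have hw2 : ∑ i, ∑ j, w i j * (Q i j * S (Fin.castLE hmn i) (Fin.castLE hmn j))
        = (∑ i, ∑ j, ((mu * s1 i + d1 i) * (L * s2 j + d2 j))
            * (Q i j * S (Fin.castLE hmn i) (Fin.castLE hmn j)))
          + (∑ i, ∑ j, ((L * s1 i + d1 i) * (mu * s2 j + d2 j))
            * (Q i j * S (Fin.castLE hmn i) (Fin.castLE hmn j))) := by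
      rw [← Finset.sum_add_distrib]
      apply Finset.sum_congr rfl
      intro i _
      rw [← Finset.sum_add_distrib]
      apply Finset.sum_congr rfl
      intro j _
      simp only [hw]
      ring
    rw [hw2]
    linarith [hkey]
  have hfin : ∑ i, w i (τ i)
      = (∑ i, (L * s1 i + d1 i) * (mu * s2 (τ i) + d2 (τ i)))
        + (∑ i, (mu * s1 i + d1 i) * (L * s2 (τ i) + d2 (τ i))) := by
    rw [← Finset.sum_add_distrib]
    apply Finset.sum_congr rfl
    intro i _
    simp only [hw]
    ring
  rw [hfin] at hτ
  linarith [step0, step1, hτ]
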